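/- Let β > 0 and γ > 0 and define g(t) = (γ/β)·((e^{βt} − 1)/(e^{γt} − 1)) − 1 for t > 0. If β > γ then g is increasing on (0,∞), and if β < γ then g is decreasing on (0,∞). -/
import Mathlib

open Real Set

lemma psi_pos {b c : ℝ} (hc : 0 < c) (hcb : c < b) {t : ℝ} (ht : 0 < t) :
    0 < (b - c) * Real.exp (b * t) - b * Real.exp ((b - c) * t) + c := by
  have hmono : StrictMonoOn
      (fun s : ℝ => (b - c) * Real.exp (b * s) - b * Real.exp ((b - c) * s) + c) (Ici 0) := by
    apply strictMonoOn_of_deriv_pos (convex_Ici 0)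
    · fun_prop
    · intro x hx
      rw [interior_Ici] at hx
      have h1 : HasDerivAt (fun s : ℝ => Real.exp (b * s)) (Real.exp (b * x) * b) x := by
        simpa using ((hasDerivAt_id x).const_mul b).exp
      have h2 : HasDerivAt (fun s : ℝ => Real.exp ((b - c) * s))
          (Real.exp ((b - c) * x) * (b - c)) x := by
        simpa using ((hasDerivAt_id x).const_mul (b - c)).exp
      have hD : HasDerivAt
          (fun s : ℝ => (b - c) * Real.exp (b * s) - b * Real.exp ((b - c) * s) + c)
          ((b - c) * (Real.exp (b * x) * b) - b * (Real.exp ((b - c) * x) * (b - c))) x :=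
        ((h1.const_mul (b - c)).sub (h2.const_mul b)).add_const c
      rw [hD.deriv]
      have hx' : (0:ℝ) < x := hx
      have hlt : Real.exp ((b - c) * x) < Real.exp (b * x) := by
        apply Real.exp_lt_exp.mpr
        nlinarith [hx']
      nlinarith [mul_pos (mul_pos (hc.trans hcb) (sub_pos.mpr hcb)) (sub_pos.mpr hlt)]
  have h0 : (fun s : ℝ => (b - c) * Real.exp (b * s) - b * Real.exp ((b - c) * s) + c) 0 = 0 := by
    simp
  have := hmono (self_mem_Ici) (le_of_lt ht : (0:ℝ) ≤ t) ht
  simpa [h0] using this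

lemma num_pos {b c : ℝ} (hc : 0 < c) (hcb : c < b) {t : ℝ} (ht : 0 < t) :
    0 < b * Real.exp (b * t) * (Real.exp (c * t) - 1)
        - c * Real.exp (c * t) * (Real.exp (b * t) - 1) := by
  have h := psi_pos hc hcb ht
  have he : Real.exp ((b - c) * t) * Real.exp (c * t) = Real.exp (b * t) := by
    rw [← Real.exp_add]; ring_nf
  have hpos : 0 < Real.exp (c * t) := Real.exp_pos _
  nlinarith [mul_pos hpos h]

lemma hasDeriv_g (β γ : ℝ) (hγ : 0 < γ) {t : ℝ} (ht : 0 < t) :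
    HasDerivAt (fun t : ℝ => (γ / β) * ((Real.exp (β * t) - 1) / (Real.exp (γ * t) - 1)) - 1)
      ((γ / β) * ((Real.exp (β * t) * β * (Real.exp (γ * t) - 1)
          - (Real.exp (β * t) - 1) * (Real.exp (γ * t) * γ)) / (Real.exp (γ * t) - 1) ^ 2)) t := by
  have hne : Real.exp (γ * t) - 1 ≠ 0 := by
    have : 1 < Real.exp (γ * t) := by
      rw [← Real.exp_zero]
      exact Real.exp_lt_exp.mpr (by positivity)
    linarith
  have hA : HasDerivAt (fun s : ℝ => Real.exp (β * s) - 1) (Real.exp (β * t) * β) t := by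
    simpa using (((hasDerivAt_id t).const_mul β).exp).sub_const 1
  have hB : HasDerivAt (fun s : ℝ => Real.exp (γ * s) - 1) (Real.exp (γ * t) * γ) t := by
    simpa using (((hasDerivAt_id t).const_mul γ).exp).sub_const 1
  exact ((hA.div hB hne).const_mul (γ / β)).sub_const 1

lemma exp_gt_one {γ t : ℝ} (hγ : 0 < γ) (ht : 0 < t) : 1 < Real.exp (γ * t) := by
  rw [← Real.exp_zero]
  exact Real.exp_lt_exp.mpr (by positivity)

lemma cont_g (β γ : ℝ) (hγ : 0 < γ) :
    ContinuousOn (fun t : ℝ => (γ / β) * ((Real.exp (β * t) - 1) / (Real.exp (γ * t) - 1)) - 1)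
      (Ioi 0) := by
  apply ContinuousOn.sub _ continuousOn_const
  apply ContinuousOn.mul continuousOn_const
  apply ContinuousOn.div (by fun_prop) (by fun_prop)
  intro x hx
  have := exp_gt_one hγ (mem_Ioi.mp hx)
  linarith

/-- `g(t) = (γ/β)((e^{βt}−1)/(e^{γt}−1)) − 1` is increasing on `(0,∞)`
when `β > γ` and decreasing when `β < γ`. -/
theorem stmt_5 (β γ : ℝ) (hβ : 0 < β) (hγ : 0 < γ) :
    (β > γ → StrictMonoOn
        (fun t : ℝ => (γ / β) * ((Real.exp (β * t) - 1) / (Real.exp (γ * t) - 1)) - 1)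
        (Set.Ioi 0)) ∧
    (β < γ → StrictAntiOn
        (fun t : ℝ => (γ / β) * ((Real.exp (β * t) - 1) / (Real.exp (γ * t) - 1)) - 1)
        (Set.Ioi 0)) := by
  constructor
  · intro hgt
    apply strictMonoOn_of_deriv_pos (convex_Ioi 0) (cont_g β γ hγ)
    intro x hx
    rw [interior_Ioi] at hx
    rw [(hasDeriv_g β γ hγ hx).deriv]
    have hnum := num_pos hγ hgt hx
    have hden : 0 < (Real.exp (γ * x) - 1) ^ 2 := by
      have := exp_gt_one hγ hx
      have h0 : 0 < Real.exp (γ * x) - 1 := by linarith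
      positivity
    have : 0 < Real.exp (β * x) * β * (Real.exp (γ * x) - 1)
        - (Real.exp (β * x) - 1) * (Real.exp (γ * x) * γ) := by nlinarith [hnum]
    exact mul_pos (div_pos hγ hβ) (div_pos this hden)
  · intro hlt
    apply strictAntiOn_of_deriv_neg (convex_Ioi 0) (cont_g β γ hγ)
    intro x hx
    rw [interior_Ioi] at hx
    rw [(hasDeriv_g β γ hγ hx).deriv]
    have hnum := num_pos hβ hlt hx
    have hden : 0 < (Real.exp (γ * x) - 1) ^ 2 := by
      have := exp_gt_one hγ hx
      have h0 : 0 < Real.exp (γ * x) - 1 := by linarith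
      positivity
    have hX : Real.exp (β * x) * β * (Real.exp (γ * x) - 1)
        - (Real.exp (β * x) - 1) * (Real.exp (γ * x) * γ) < 0 := by nlinarith [hnum]
    have hc : 0 < γ / β := div_pos hγ hβ
    exact mul_neg_of_pos_of_neg hc (div_neg_of_neg_of_pos hX hden)
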